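/- Let Z and X be finite-dimensional real normed vector spaces, K ⊆ Z a convex cone, m* ∈ Z*, and L ∈ B(Z,X) such that L(K) = X. Let H be a set of piecewise continuous K-valued trajectories z : [t0,t1] → K on compact intervals such that: (a) for every z0 ∈ K with L(z0) = 0 and every compact interval [t0,t1], the constant trajectory z(t) ≡ z0 belongs to H; and (b) every z ∈ H admits an L-antiderivative x with x(t0) = x(t1). Then the following are equivalent: (i) there exists p* ∈ X* such that p*(L(z)) − m*(z) ≤ 0 for all z ∈ K; (iii) ∫_{t0}^{t1} m*(z(t)) dt ≥ 0 for every z ∈ H. -/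

import Mathlib

open Filter Set MeasureTheory intervalIntegral Pointwise

/-- A function `f : ℝ → E` is piecewise continuous on `[a, b]` if it is continuous
there except possibly at finitely many points, at each of which it possesses
one-sided limits. -/
def PiecewiseContinuousOn {E : Type*} [NormedAddCommGroup E]
    (f : ℝ → E) (a b : ℝ) : Prop :=
  ∃ S : Finset ℝ, ContinuousOn f (Set.Icc a b \ S) ∧
    ∀ t ∈ S, (∃ l, Tendsto f (nhdsWithin t (Set.Iio t)) (nhds l)) ∧
      (∃ l, Tendsto f (nhdsWithin t (Set.Ioi t)) (nhds l))

lemma PiecewiseContinuousOn.comp_clm {E F : Type*} [NormedAddCommGroup E]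
    [NormedAddCommGroup F] [NormedSpace ℝ E] [NormedSpace ℝ F]
    {f : ℝ → E} {a b : ℝ} (g : E →L[ℝ] F) (hf : PiecewiseContinuousOn f a b) :
    PiecewiseContinuousOn (fun t => g (f t)) a b := by
  obtain ⟨S, hc, hl⟩ := hf
  refine ⟨S, g.continuous.comp_continuousOn hc, fun t ht => ?_⟩
  obtain ⟨⟨l₁, h₁⟩, l₂, h₂⟩ := hl t ht
  exact ⟨⟨g l₁, (g.continuous.tendsto l₁).comp h₁⟩,
    ⟨g l₂, (g.continuous.tendsto l₂).comp h₂⟩⟩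

lemma PiecewiseContinuousOn.intervalIntegrable {E : Type*} [NormedAddCommGroup E]
    {f : ℝ → E} {a b : ℝ} (hab : a ≤ b) (hf : PiecewiseContinuousOn f a b) :
    IntervalIntegrable f MeasureTheory.volume a b := by
  obtain ⟨S, hc, hl⟩ := hf
  set T : Set ℝ := Set.Icc a b \ (S : Set ℝ) with hT
  have hTmeas : MeasurableSet T := measurableSet_Icc.diff (S.finite_toSet.measurableSet)
  -- local boundedness
  have hbd : ∀ t ∈ Set.Icc a b, ∃ C : ℝ, ∀ᶠ s in nhdsWithin t T, ‖f s‖ ≤ C := by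
    intro t ht
    by_cases hts : t ∈ S
    · obtain ⟨⟨l₁, h₁⟩, l₂, h₂⟩ := hl t hts
      refine ⟨max ‖l₁‖ ‖l₂‖ + 1, ?_⟩
      have hb1 : ∀ᶠ s in nhdsWithin t (Set.Iio t), ‖f s‖ ≤ max ‖l₁‖ ‖l₂‖ + 1 := by
        filter_upwards [h₁.norm.eventually_lt_const
          (by linarith [le_max_left ‖l₁‖ ‖l₂‖] : ‖l₁‖ < max ‖l₁‖ ‖l₂‖ + 1)] with s hs
        exact hs.le
      have hb2 : ∀ᶠ s in nhdsWithin t (Set.Ioi t), ‖f s‖ ≤ max ‖l₁‖ ‖l₂‖ + 1 := by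
        filter_upwards [h₂.norm.eventually_lt_const
          (by linarith [le_max_right ‖l₁‖ ‖l₂‖] : ‖l₂‖ < max ‖l₁‖ ‖l₂‖ + 1)] with s hs
        exact hs.le
      have hne : nhdsWithin t T ≤ nhdsWithin t ({t}ᶜ) :=
        nhdsWithin_mono t (fun s hs => by
          simp only [Set.mem_compl_iff, Set.mem_singleton_iff]
          rintro rfl
          exact hs.2 hts)
      have : ∀ᶠ s in nhdsWithin t ({t}ᶜ), ‖f s‖ ≤ max ‖l₁‖ ‖l₂‖ + 1 := by
        rw [← nhdsLT_sup_nhdsGT, eventually_sup]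
        exact ⟨hb1, hb2⟩
      exact this.filter_mono hne
    · refine ⟨‖f t‖ + 1, ?_⟩
      have htT : t ∈ T := ⟨ht, hts⟩
      have := (hc t htT).norm.eventually_lt_const (lt_add_one ‖f t‖)
      filter_upwards [this] with s hs using hs.le
  -- extract neighborhoods
  have hbd' : ∀ t ∈ Set.Icc a b, ∃ C : ℝ, ∃ U : Set ℝ, IsOpen U ∧ t ∈ U ∧
      ∀ s ∈ U ∩ T, ‖f s‖ ≤ C := by
    intro t ht
    obtain ⟨C, hC⟩ := hbd t ht
    rw [eventually_iff, mem_nhdsWithin] at hC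
    obtain ⟨U, hUo, htU, hU⟩ := hC
    exact ⟨C, U, hUo, htU, fun s hs => hU hs⟩
  choose! C U hUo hUt hUb using hbd'
  obtain ⟨F, hFmem, hFcov⟩ := isCompact_Icc.elim_nhds_subcover U
    (fun t ht => (hUo t ht).mem_nhds (hUt t ht))
  -- global bound
  have key : ∀ s ∈ T, ‖f s‖ ≤ F.sup' (α := ℝ) (by
      rcases Finset.eq_empty_or_nonempty F with h | h
      · subst h
        exact absurd (hFcov (Set.mem_Icc.mpr ⟨le_refl a, hab⟩)) (by simp)
      · exact h) C ∨ F = ∅ := by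
    intro s hs
    left
    have hsIcc : s ∈ Set.Icc a b := hs.1
    obtain ⟨t, htF, hsU⟩ := Set.mem_iUnion₂.mp (hFcov hsIcc)
    calc ‖f s‖ ≤ C t := hUb t (hFmem t htF) s ⟨hsU, hs⟩
    _ ≤ _ := Finset.le_sup' _ htF
  have hFne : F.Nonempty := by
    rcases Finset.eq_empty_or_nonempty F with h | h
    · subst h
      exact absurd (hFcov (Set.mem_Icc.mpr ⟨le_refl a, hab⟩)) (by simp)
    · exact h
  set M : ℝ := F.sup' hFne C with hM
  have keyM : ∀ s ∈ T, ‖f s‖ ≤ M := by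
    intro s hs
    have hsIcc : s ∈ Set.Icc a b := hs.1
    obtain ⟨t, htF, hsU⟩ := Set.mem_iUnion₂.mp (hFcov hsIcc)
    calc ‖f s‖ ≤ C t := hUb t (hFmem t htF) s ⟨hsU, hs⟩
    _ ≤ M := Finset.le_sup' _ htF
  -- integrability on T
  have hmeas : AEStronglyMeasurable f (MeasureTheory.volume.restrict T) :=
    hc.aestronglyMeasurable hTmeas
  have hTfin : MeasureTheory.volume T < ⊤ :=
    lt_of_le_of_lt (measure_mono Set.diff_subset) measure_Icc_lt_top
  have hintT : MeasureTheory.IntegrableOn f T MeasureTheory.volume := by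
    refine ⟨hmeas, MeasureTheory.HasFiniteIntegral.restrict_of_bounded (C := M) hTfin ?_⟩
    rw [MeasureTheory.ae_restrict_iff' hTmeas]
    exact Filter.Eventually.of_forall keyM
  have hSnull : MeasureTheory.volume (Set.Icc a b ∩ (S : Set ℝ)) = 0 :=
    measure_mono_null Set.inter_subset_right (S.finite_toSet.measure_zero _)
  have haeeq : T =ᵐ[MeasureTheory.volume] Set.Icc a b :=
    (MeasureTheory.diff_ae_eq_self).mpr hSnull
  have hint : MeasureTheory.IntegrableOn f (Set.Icc a b) MeasureTheory.volume :=
    hintT.congr_set_ae haeeq.symm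
  have : MeasureTheory.IntegrableOn f (Set.uIcc a b) MeasureTheory.volume := by
    rwa [Set.uIcc_of_le hab]
  exact this.intervalIntegrable

/-- Corollary, conditions (i) ⇔ (iii). A trajectory is encoded as a
triple `p = (t0, t1, z)` with `z : ℝ → Z` considered on the compact interval
`[t0, t1]`; `H` is a set of such triples, all piecewise continuous and `K`-valued,
containing all constant trajectories at kernel points of `L`, where every member of
`H` admits an `L`-antiderivative with equal endpoint values. Then the conic
inequality is solvable iff `∫ m*(z) ≥ 0` along every trajectory of `H`. -/
theorem exists_functional_conic_ineq_iff_integral_nonneg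
    {Z X : Type*} [NormedAddCommGroup Z] [NormedSpace ℝ Z] [FiniteDimensional ℝ Z]
    [NormedAddCommGroup X] [NormedSpace ℝ X] [FiniteDimensional ℝ X]
    (K : Set Z) (hKcone : ∀ z ∈ K, ∀ α : ℝ, 0 ≤ α → α • z ∈ K) (hKconv : Convex ℝ K)
    (mstar : Z →L[ℝ] ℝ) (L : Z →L[ℝ] X) (hLK : L '' K = Set.univ)
    (H : Set (ℝ × ℝ × (ℝ → Z)))
    (hH : ∀ p ∈ H, p.1 ≤ p.2.1 ∧ (∀ t ∈ Set.Icc p.1 p.2.1, p.2.2 t ∈ K) ∧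
      PiecewiseContinuousOn p.2.2 p.1 p.2.1)
    (hHconst : ∀ z0 ∈ K, L z0 = 0 → ∀ t0 t1 : ℝ, t0 ≤ t1 →
      (t0, t1, fun _ : ℝ => z0) ∈ H)
    (hHret : ∀ p ∈ H, ∃ x : ℝ → X,
      (∀ s ∈ Set.Icc p.1 p.2.1, ∀ t ∈ Set.Icc p.1 p.2.1,
        x t - x s = ∫ τ in s..t, L (p.2.2 τ)) ∧ x p.1 = x p.2.1) :
    (∃ pstar : X →L[ℝ] ℝ, ∀ z ∈ K, pstar (L z) - mstar z ≤ 0) ↔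
      (∀ p ∈ H, 0 ≤ ∫ t in p.1..p.2.1, mstar (p.2.2 t)) := by
  have hsurj : ∀ x : X, ∃ z ∈ K, L z = x := by
    intro x
    have : x ∈ L '' K := hLK ▸ Set.mem_univ x
    obtain ⟨z, hz, hzx⟩ := this
    exact ⟨z, hz, hzx⟩
  have hadd : ∀ z ∈ K, ∀ w ∈ K, z + w ∈ K := by
    intro z hz w hw
    have h2 : ((1:ℝ)/2) • z + ((1:ℝ)/2) • w ∈ K :=
      hKconv hz hw (by norm_num) (by norm_num) (by norm_num)
    have := hKcone _ h2 2 (by norm_num)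
    rwa [smul_add, smul_smul, smul_smul, show (2:ℝ) * (1/2) = 1 by norm_num,
      one_smul, one_smul] at this
  constructor
  · -- (i) ⇒ (iii)
    rintro ⟨pstar, hp⟩ p hpH
    obtain ⟨hle, hKval, hpc⟩ := hH p hpH
    obtain ⟨x, hx, hxeq⟩ := hHret p hpH
    have hintL : IntervalIntegrable (fun t => L (p.2.2 t)) MeasureTheory.volume p.1 p.2.1 :=
      (hpc.comp_clm L).intervalIntegrable hle
    have hintm : IntervalIntegrable (fun t => mstar (p.2.2 t)) MeasureTheory.volume p.1 p.2.1 :=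
      (hpc.comp_clm mstar).intervalIntegrable hle
    have hintpL : IntervalIntegrable (fun t => pstar (L (p.2.2 t)))
        MeasureTheory.volume p.1 p.2.1 :=
      (hpc.comp_clm (pstar.comp L)).intervalIntegrable hle
    have hzero : (∫ τ in p.1..p.2.1, L (p.2.2 τ)) = 0 := by
      have := hx p.1 (Set.mem_Icc.mpr ⟨le_refl _, hle⟩) p.2.1
        (Set.mem_Icc.mpr ⟨hle, le_refl _⟩)
      rw [← this, hxeq, sub_self]
    have hpL : (∫ τ in p.1..p.2.1, pstar (L (p.2.2 τ))) = 0 := by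
      rw [pstar.intervalIntegral_comp_comm hintL, hzero, map_zero]
    have hnn : 0 ≤ ∫ t in p.1..p.2.1, (mstar (p.2.2 t) - pstar (L (p.2.2 t))) := by
      apply intervalIntegral.integral_nonneg hle
      intro u hu
      have := hp (p.2.2 u) (hKval u hu)
      linarith
    rw [intervalIntegral.integral_sub hintm hintpL, hpL, sub_zero] at hnn
    exact hnn
  · -- (iii) ⇒ (i)
    intro hiii
    -- m* nonneg on K ∩ ker L
    have hm : ∀ z ∈ K, L z = 0 → 0 ≤ mstar z := by
      intro z hz hLz
      have hmem := hHconst z hz hLz 0 1 zero_le_one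
      have := hiii _ hmem
      simpa using this
    -- the sublinear functional
    set fib : X → Set ℝ := fun x => mstar '' {z | z ∈ K ∧ L z = x} with hfib
    have hne : ∀ x, (fib x).Nonempty := by
      intro x
      obtain ⟨z, hz, hzx⟩ := hsurj x
      exact ⟨mstar z, z, ⟨hz, hzx⟩, rfl⟩
    have hbdd : ∀ x, BddBelow (fib x) := by
      intro x
      obtain ⟨w, hw, hwx⟩ := hsurj (-x)
      refine ⟨-mstar w, ?_⟩
      rintro r ⟨z, ⟨hz, hzx⟩, rfl⟩
      have hzw : z + w ∈ K := hadd z hz w hw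
      have hL0 : L (z + w) = 0 := by rw [map_add, hzx, hwx, add_neg_cancel]
      have := hm _ hzw hL0
      rw [map_add] at this
      linarith
    set N : X → ℝ := fun x => sInf (fib x) with hN
    have hNle : ∀ z ∈ K, N (L z) ≤ mstar z := by
      intro z hz
      exact csInf_le (hbdd _) ⟨z, ⟨hz, rfl⟩, rfl⟩
    have hN0 : 0 ≤ N 0 := by
      apply le_csInf (hne 0)
      rintro r ⟨z, ⟨hz, hz0⟩, rfl⟩
      exact hm z hz hz0
    have hNadd : ∀ x y, N (x + y) ≤ N x + N y := by
      intro x y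
      have key : ∀ b ∈ fib x, ∀ c ∈ fib y, N (x + y) ≤ b + c := by
        rintro b ⟨z, ⟨hz, hzx⟩, rfl⟩ c ⟨w, ⟨hw, hwy⟩, rfl⟩
        have : mstar z + mstar w ∈ fib (x + y) := by
          refine ⟨z + w, ⟨hadd z hz w hw, by rw [map_add, hzx, hwy]⟩, by rw [map_add]⟩
        exact csInf_le (hbdd _) this
      have step : ∀ b ∈ fib x, N (x + y) - b ≤ N y := by
        intro b hb
        apply le_csInf (hne y)
        intro c hc
        linarith [key b hb c hc]
      have : N (x + y) - N y ≤ N x := by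
        apply le_csInf (hne x)
        intro b hb
        linarith [step b hb]
      linarith
    have hNhom : ∀ c : ℝ, 0 < c → ∀ x, N (c • x) = c * N x := by
      intro c hc x
      have hset : fib (c • x) = c • fib x := by
        ext r
        constructor
        · rintro ⟨z, ⟨hz, hzx⟩, rfl⟩
          refine ⟨mstar (c⁻¹ • z), ⟨c⁻¹ • z,
            ⟨hKcone z hz c⁻¹ (inv_nonneg.mpr hc.le), by
              rw [_root_.map_smul, hzx, smul_smul, inv_mul_cancel₀ hc.ne', one_smul]⟩, rfl⟩, ?_⟩
          show c • mstar (c⁻¹ • z) = mstar z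
          rw [_root_.map_smul, smul_smul, mul_inv_cancel₀ hc.ne', one_smul]
        · rintro ⟨r, ⟨z, ⟨hz, hzx⟩, rfl⟩, rfl⟩
          refine ⟨c • z, ⟨hKcone z hz c hc.le, by rw [_root_.map_smul, hzx]⟩, ?_⟩
          show mstar (c • z) = c • mstar z
          rw [_root_.map_smul]
      rw [hN]
      simp only
      rw [hset, Real.sInf_smul_of_nonneg hc.le, smul_eq_mul]
    -- Hahn-Banach
    obtain ⟨g, -, hgle⟩ := exists_extension_of_le_sublinear
      ⟨⊥, (0 : (⊥ : Submodule ℝ X) →ₗ[ℝ] ℝ)⟩ N hNhom hNadd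
      (by
        rintro ⟨x, hx⟩
        have hx0 : x = 0 := by simpa using hx
        subst hx0
        simpa using hN0)
    refine ⟨LinearMap.toContinuousLinearMap g, fun z hz => ?_⟩
    have : g (L z) ≤ N (L z) := hgle (L z)
    have h2 := hNle z hz
    simp only [LinearMap.coe_toContinuousLinearMap']
    linarith
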